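/- Polar of the Gain-to-Loss Ratio acceptance set: fix a real number m > 0 and let A^m := { X ∈ L¹(Ω, F, P) : E[X] ≥ m · E[X⁻] }. Then for every Z ∈ L^∞(Ω, F, P): ( E[Z·X] ≥ 0 for all X ∈ A^m ) if and only if there exists a real c ≥ 0 with c ≤ Z ≤ c(m+1) P-a.s. -/

import Mathlib

open MeasureTheory
open scoped ENNReal

variable {Ω : Type*} {m0 : MeasurableSpace Ω}

private lemma glr_ae_bound (P : Measure Ω) (Z : Ω → ℝ) (hZ : MemLp Z ⊤ P) :
    ∃ C : ℝ, ∀ᵐ ω ∂P, ‖Z ω‖ ≤ C := by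
  refine ⟨(eLpNormEssSup Z P).toReal, ?_⟩
  have h1 := ae_le_eLpNormEssSup (f := Z) (μ := P)
  have h2 : eLpNormEssSup Z P ≠ ⊤ := by
    have := hZ.2
    rwa [eLpNorm_exponent_top, lt_top_iff_ne_top] at this
  filter_upwards [h1] with ω hω
  calc ‖Z ω‖ = ((‖Z ω‖₊ : ℝ≥0∞)).toReal := by simp
    _ ≤ (eLpNormEssSup Z P).toReal := ENNReal.toReal_mono h2 hω

private lemma glr_forward (P : Measure Ω) [IsProbabilityMeasure P]
    (m : ℝ) (hm : 0 < m) (Z : Ω → ℝ) (hZm : StronglyMeasurable Z) (hZ : MemLp Z ⊤ P)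
    (H : ∀ X : Ω → ℝ, Integrable X P →
        m * ∫ ω, max (-X ω) 0 ∂P ≤ ∫ ω, X ω ∂P → 0 ≤ ∫ ω, Z ω * X ω ∂P) :
    ∃ c : ℝ, 0 ≤ c ∧ ∀ᵐ ω ∂P, c ≤ Z ω ∧ Z ω ≤ c * (m + 1) := by
  have hZint : Integrable Z P := hZ.integrable le_top
  obtain ⟨C, hC⟩ := glr_ae_bound P Z hZ
  have hbddA : Filter.IsBoundedUnder (· ≤ ·) (ae P) Z :=
    ⟨C, Filter.eventually_map.mpr <| by
      filter_upwards [hC] with ω h using le_trans (le_abs_self _) h⟩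
  have hbddB : Filter.IsBoundedUnder (· ≥ ·) (ae P) Z :=
    ⟨-C, Filter.eventually_map.mpr <| by
      filter_upwards [hC] with ω h using (abs_le.mp (by rwa [Real.norm_eq_abs] at h)).1⟩
  have hneB : (ae P).NeBot := IsProbabilityMeasure.ae_neBot
  set a := essInf Z P with ha
  set b := essSup Z P with hb
  have haZ : ∀ᵐ ω ∂P, a ≤ Z ω := ae_essInf_le hbddB
  have hZb : ∀ᵐ ω ∂P, Z ω ≤ b := ae_le_essSup hbddA
  have hintZ0 : 0 ≤ ∫ ω, Z ω ∂P := by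
    have h := H (fun _ => 1) (integrable_const 1) (by simp)
    simpa using h
  have hZle : ∫ ω, Z ω ∂P ≤ b := by
    calc ∫ ω, Z ω ∂P ≤ ∫ _ω, b ∂P := integral_mono_ae hZint (integrable_const b) hZb
      _ = b := by simp
  have haint : a ≤ ∫ ω, Z ω ∂P := by
    calc a = ∫ _ω, a ∂P := by simp
      _ ≤ ∫ ω, Z ω ∂P := integral_mono_ae (integrable_const a) hZint haZ
  have hab : a ≤ b := le_trans haint hZle
  have key : b ≤ (m + 1) * a := by
    by_contra hcon
    push_neg at hcon
    rcases eq_or_lt_of_le hab with heq | hlt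
    · nlinarith
    · set ε := min ((b - (m + 1) * a) / (m + 2)) ((b - a) / 2) / 2 with hεdef
      have hεpos : 0 < ε := by
        apply half_pos
        apply lt_min
        · apply div_pos (by linarith) (by linarith)
        · linarith
      have hεle1 : ε ≤ (b - (m + 1) * a) / (m + 2) / 2 := by
        have := min_le_left ((b - (m + 1) * a) / (m + 2)) ((b - a) / 2)
        rw [hεdef]; linarith
      have hεle2 : ε ≤ (b - a) / 2 / 2 := by
        have := min_le_right ((b - (m + 1) * a) / (m + 2)) ((b - a) / 2)
        rw [hεdef]; linarith
      have hsep : a + ε < b - ε := by linarith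
      have h2 : (m + 1) * (a + ε) < b - ε := by
        have hmul : (m + 2) * ε ≤ (b - (m + 1) * a) / 2 := by
          have h' : (m + 2) * ε ≤ (m + 2) * ((b - (m + 1) * a) / (m + 2) / 2) :=
            mul_le_mul_of_nonneg_left hεle1 (by linarith)
          have heq' : (m + 2) * ((b - (m + 1) * a) / (m + 2) / 2) = (b - (m + 1) * a) / 2 := by
            field_simp
          linarith
        nlinarith
      have hZmeas : Measurable Z := hZm.measurable
      set A := {ω | Z ω < a + ε} with hAdef
      set B := {ω | b - ε < Z ω} with hBdef
      have hAm : MeasurableSet A := measurableSet_lt hZmeas measurable_const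
      have hBm : MeasurableSet B := measurableSet_lt measurable_const hZmeas
      have hA0 : P A ≠ 0 := by
        intro h0
        have hae : ∀ᵐ ω ∂P, a + ε ≤ Z ω := by
          rw [ae_iff]
          simpa [hAdef, not_le] using h0
        have hlim : a + ε ≤ (ae P).liminf Z :=
          Filter.le_liminf_of_le hbddA.isCoboundedUnder_ge hae
        have ha' : essInf Z P = (ae P).liminf Z := rfl
        rw [← ha', ← ha] at hlim
        linarith
      have hB0 : P B ≠ 0 := by
        intro h0
        have hae : ∀ᵐ ω ∂P, Z ω ≤ b - ε := by
          rw [ae_iff]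
          simpa [hBdef, not_le] using h0
        have hlim : (ae P).limsup Z ≤ b - ε :=
          Filter.limsup_le_of_le hbddB.isCoboundedUnder_le hae
        have hb' : essSup Z P = (ae P).limsup Z := rfl
        rw [← hb', ← hb] at hlim
        linarith
      set p := (P A).toReal with hpdef
      set q := (P B).toReal with hqdef
      have hp : 0 < p := ENNReal.toReal_pos hA0 (measure_ne_top P A)
      have hq : 0 < q := ENNReal.toReal_pos hB0 (measure_ne_top P B)
      set α := (m + 1) * q / p with hαdef
      have hα : 0 < α := div_pos (mul_pos (by linarith) hq) hp
      have hαp : α * p = (m + 1) * q := by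
        rw [hαdef]; field_simp
      set X : Ω → ℝ := fun ω =>
        α * A.indicator (fun _ => (1 : ℝ)) ω - B.indicator (fun _ => (1 : ℝ)) ω with hXdef
      have hindA : Integrable (A.indicator fun _ => (1 : ℝ)) P :=
        (integrable_const (1 : ℝ)).indicator hAm
      have hindB : Integrable (B.indicator fun _ => (1 : ℝ)) P :=
        (integrable_const (1 : ℝ)).indicator hBm
      have hXint : Integrable X P := (hindA.const_mul α).sub hindB
      have hdisj : ∀ ω, ω ∈ A → ω ∉ B := by
        intro ω h1 h2
        rw [hAdef, Set.mem_setOf_eq] at h1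
        rw [hBdef, Set.mem_setOf_eq] at h2
        linarith
      have hmax : (fun ω => max (-X ω) 0) = B.indicator (fun _ => (1 : ℝ)) := by
        funext ω
        by_cases hA' : ω ∈ A
        · have hB' : ω ∉ B := hdisj ω hA'
          simp only [hXdef, Set.indicator_of_mem hA', Set.indicator_of_notMem hB', mul_one,
            sub_zero]
          rw [max_eq_right (by linarith)]
        · by_cases hB' : ω ∈ B
          · simp only [hXdef, Set.indicator_of_notMem hA', Set.indicator_of_mem hB', mul_zero,
              zero_sub, neg_neg]
            rw [max_eq_left (by norm_num)]
          · simp only [hXdef, Set.indicator_of_notMem hA', Set.indicator_of_notMem hB',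
              mul_zero, sub_zero, neg_zero, max_self]
      have hint_max : ∫ ω, max (-X ω) 0 ∂P = q := by
        have h' : ∫ ω, max (-X ω) 0 ∂P = ∫ ω, B.indicator (fun _ => (1 : ℝ)) ω ∂P :=
          integral_congr_ae (Filter.Eventually.of_forall fun ω => congrFun hmax ω)
        rw [h', integral_indicator_const (1 : ℝ) hBm, smul_eq_mul, mul_one, measureReal_def]
      have hint_X : ∫ ω, X ω ∂P = α * p - q := by
        rw [hXdef]
        rw [integral_sub (hindA.const_mul α) hindB, integral_const_mul α _,
          integral_indicator_const (1 : ℝ) hAm, integral_indicator_const (1 : ℝ) hBm,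
          smul_eq_mul, smul_eq_mul, mul_one, mul_one, measureReal_def, measureReal_def]
      have hacc : m * ∫ ω, max (-X ω) 0 ∂P ≤ ∫ ω, X ω ∂P := by
        rw [hint_max, hint_X, hαp]; linarith
      have hHX := H X hXint hacc
      have hZXeq : (fun ω => Z ω * X ω)
          = fun ω => α * A.indicator Z ω - B.indicator Z ω := by
        funext ω
        by_cases hA' : ω ∈ A <;> by_cases hB' : ω ∈ B <;>
          simp [hXdef, Set.indicator, hA', hB'] <;> ring
      have hint_ZX : ∫ ω, Z ω * X ω ∂P
          = α * ∫ ω in A, Z ω ∂P - ∫ ω in B, Z ω ∂P := by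
        have h' : ∫ ω, Z ω * X ω ∂P
            = ∫ ω, (α * A.indicator Z ω - B.indicator Z ω) ∂P :=
          integral_congr_ae (Filter.Eventually.of_forall fun ω => congrFun hZXeq ω)
        rw [h', integral_sub ((hZint.indicator hAm).const_mul α) (hZint.indicator hBm),
          integral_const_mul α _, integral_indicator hAm, integral_indicator hBm]
      have hIA : ∫ ω in A, Z ω ∂P ≤ (a + ε) * p := by
        calc ∫ ω in A, Z ω ∂P ≤ ∫ _ω in A, (a + ε) ∂P := by
              refine setIntegral_mono_on hZint.integrableOn
                (integrableOn_const (measure_ne_top P A)) hAm ?_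
              intro ω hω
              rw [hAdef, Set.mem_setOf_eq] at hω
              linarith
          _ = (a + ε) * p := by rw [setIntegral_const, smul_eq_mul, mul_comm, measureReal_def]
      have hIB : (b - ε) * q ≤ ∫ ω in B, Z ω ∂P := by
        calc (b - ε) * q = ∫ _ω in B, (b - ε) ∂P := by
              rw [setIntegral_const, smul_eq_mul, mul_comm, measureReal_def]
          _ ≤ ∫ ω in B, Z ω ∂P := by
              refine setIntegral_mono_on (integrableOn_const (measure_ne_top P B))
                hZint.integrableOn hBm ?_
              intro ω hω
              rw [hBdef, Set.mem_setOf_eq] at hω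
              linarith
      rw [hint_ZX] at hHX
      have hstep : α * ∫ ω in A, Z ω ∂P ≤ α * ((a + ε) * p) :=
        mul_le_mul_of_nonneg_left hIA hα.le
      have hrw : α * ((a + ε) * p) = (a + ε) * ((m + 1) * q) := by
        rw [← hαp]; ring
      have hfin : 0 < q * ((b - ε) - (m + 1) * (a + ε)) :=
        mul_pos hq (by linarith)
      nlinarith [hstep, hrw, hIB, hHX, hfin]
  have ha0 : 0 ≤ a := by nlinarith
  refine ⟨a, ha0, ?_⟩
  filter_upwards [haZ, hZb] with ω h1 h2
  exact ⟨h1, by nlinarith⟩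

/-- Polar of the Gain-to-Loss Ratio acceptance set `A^m = {X ∈ L¹ : E[X] ≥ m·E[X⁻]}` for a
real `m > 0`: a `Z ∈ L^∞` satisfies `E[Z·X] ≥ 0` for all `X ∈ A^m` iff there is a real
`c ≥ 0` with `c ≤ Z ≤ c(m+1)` `P`-a.s. -/
theorem GLR_acceptance_polar (P : Measure Ω) [IsProbabilityMeasure P]
    (m : ℝ) (hm : 0 < m) (Z : Ω → ℝ) (hZ : MemLp Z ⊤ P) :
    (∀ X : Ω → ℝ, Integrable X P →
        m * ∫ ω, max (-X ω) 0 ∂P ≤ ∫ ω, X ω ∂P → 0 ≤ ∫ ω, Z ω * X ω ∂P) ↔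
      ∃ c : ℝ, 0 ≤ c ∧ ∀ᵐ ω ∂P, c ≤ Z ω ∧ Z ω ≤ c * (m + 1) := by
  constructor
  · intro H
    set Z' := hZ.1.mk Z with hZ'def
    have hZeq : Z =ᵐ[P] Z' := hZ.1.ae_eq_mk
    have hZ' : MemLp Z' ⊤ P := hZ.ae_eq hZeq
    obtain ⟨c, hc0, hcae⟩ := glr_forward P m hm Z' hZ.1.stronglyMeasurable_mk hZ'
      (fun X hX hacc => by
        have h0 := H X hX hacc
        have heq : ∫ ω, Z ω * X ω ∂P = ∫ ω, Z' ω * X ω ∂P :=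
          integral_congr_ae (by filter_upwards [hZeq] with ω h; rw [h])
        linarith)
    refine ⟨c, hc0, ?_⟩
    filter_upwards [hcae, hZeq] with ω h1 h2
    rw [h2]; exact h1
  · rintro ⟨c, hc0, hcae⟩ X hX hacc
    have hXneg : Integrable (fun ω => max (-X ω) 0) P := hX.neg_part
    obtain ⟨C, hC⟩ := glr_ae_bound P Z hZ
    have hZX : Integrable (fun ω => Z ω * X ω) P :=
      Integrable.bdd_mul hX hZ.1 hC
    have hpt : ∀ᵐ ω ∂P, c * X ω - c * m * max (-X ω) 0 ≤ Z ω * X ω := by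
      filter_upwards [hcae] with ω hω
      obtain ⟨h1, h2⟩ := hω
      rcases le_or_gt 0 (X ω) with h | h
      · rw [max_eq_right (by linarith)]
        nlinarith
      · rw [max_eq_left (by linarith)]
        nlinarith
    have hint1 : Integrable (fun ω => c * X ω - c * m * max (-X ω) 0) P :=
      (hX.const_mul c).sub (hXneg.const_mul (c * m))
    have hmono := integral_mono_ae hint1 hZX hpt
    rw [integral_sub (hX.const_mul c) (hXneg.const_mul (c * m)), integral_const_mul c _,
      integral_const_mul (c * m) _] at hmono
    nlinarith [mul_nonneg hc0 (sub_nonneg.2 hacc)]
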